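/- Let Δ be a pointed Γ-rational polyhedron in ℝⁿ with recession cone σ, and let p be a multiplicative seminorm on K[σ̌ ∩ M] extending |·| on K. Then p(f) ≤ 1 for all f ∈ K[M]^Δ if and only if trop_v(p) ∈ Δ, where trop_v(p) ∈ ℝⁿ is defined by ⟨u, trop_v(p)⟩ = −log p(χ^u) for u ∈ ℤⁿ. -/

import Mathlib

open scoped BigOperators

/-- A pointed set: it contains no affine line. -/
def IsPointedSet {n : ℕ} (Δ : Set (Fin n → ℝ)) : Prop :=
  ∀ p d : Fin n → ℝ, d ≠ 0 → ¬ ∀ t : ℝ, p + t • d ∈ Δ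

/-- A `Γ`-rational polyhedron, where `Γ = {−log |α| : α ∈ K^×}` is the value group of the
absolute value `abs`. -/
def IsGRatPolyhedronAbs {K : Type*} [Field K] {n : ℕ} (abs : K → ℝ)
    (Δ : Set (Fin n → ℝ)) : Prop :=
  ∃ (N : ℕ) (u : Fin N → (Fin n → ℤ)) (c : Fin N → ℝ),
    (∀ i, ∃ α : K, α ≠ 0 ∧ - Real.log (abs α) = c i) ∧
    Δ = {ω | ∀ i, 0 ≤ (∑ j, (u i j : ℝ) * ω j) + c i}

/-- Membership in `K[M]^Δ`: every term `α_u χ^u` of `f` satisfies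
`v(α_u) + ⟨u,ω⟩ ≥ 0` for all `ω ∈ Δ`, where `v = −log abs`. -/
def MemPolRing {K : Type*} [Field K] {n : ℕ} (abs : K → ℝ) (Δ : Set (Fin n → ℝ))
    (f : AddMonoidAlgebra K (Fin n → ℤ)) : Prop :=
  ∀ u ∈ Finsupp.support f.coeff, ∀ ω ∈ Δ,
    0 ≤ - Real.log (abs (f.coeff u)) + ∑ j, (u j : ℝ) * ω j

/-- Let `Δ` be a pointed `Γ`-rational (nonempty) polyhedron and let `p` be a multiplicative
seminorm on the Laurent polynomial ring extending `abs` (a point of `T^an`).  Then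
`p(f) ≤ 1` for all `f ∈ K[M]^Δ` if and only if `trop_v(p) ∈ Δ`, where the coordinates of
`trop_v(p)` are `−log p(χ^{e_i})`. -/
theorem stmt12 {K : Type*} [Field K] {n : ℕ}
    (abs : K → ℝ)
    (habs_nonneg : ∀ α, 0 ≤ abs α)
    (habs_zero : ∀ α, abs α = 0 ↔ α = 0)
    (habs_mul : ∀ α β, abs (α * β) = abs α * abs β)
    (habs_add : ∀ α β, abs (α + β) ≤ max (abs α) (abs β))
    (Δ : Set (Fin n → ℝ))
    (hΔrat : IsGRatPolyhedronAbs abs Δ)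
    (hΔpt : IsPointedSet Δ)
    (hΔne : Δ.Nonempty)
    (p : AddMonoidAlgebra K (Fin n → ℤ) → ℝ)
    (hp_nonneg : ∀ f, 0 ≤ p f)
    (hp_mul : ∀ f g, p (f * g) = p f * p g)
    (hp_add : ∀ f g, p (f + g) ≤ max (p f) (p g))
    (hp_ext : ∀ α : K, p (AddMonoidAlgebra.single (0 : Fin n → ℤ) α) = abs α) :
    (∀ f : AddMonoidAlgebra K (Fin n → ℤ), MemPolRing abs Δ f → p f ≤ 1) ↔
      (fun i => - Real.log (p (AddMonoidAlgebra.single (Pi.single i 1 : Fin n → ℤ) (1 : K))))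
        ∈ Δ := by
  classical
  set trop : Fin n → ℝ :=
    fun i => - Real.log (p (AddMonoidAlgebra.single (Pi.single i 1 : Fin n → ℤ) (1 : K)))
    with htrop
  -- basic facts
  have habs1 : abs (1 : K) = 1 := by
    have h := habs_mul 1 1
    rw [one_mul] at h
    have h1 : abs (1 : K) ≠ 0 := fun hz => one_ne_zero ((habs_zero 1).mp hz)
    have : abs (1 : K) * 1 = abs (1 : K) * abs (1 : K) := by rw [mul_one]; exact h
    exact (mul_left_cancel₀ h1 this).symm
  have p0one : p (AddMonoidAlgebra.single (0 : Fin n → ℤ) (1 : K)) = 1 := by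
    rw [hp_ext]; exact habs1
  have qpos : ∀ u : Fin n → ℤ, 0 < p (AddMonoidAlgebra.single u (1 : K)) := by
    intro u
    have hmul : (AddMonoidAlgebra.single u (1 : K)) * (AddMonoidAlgebra.single (-u) (1 : K))
        = AddMonoidAlgebra.single (0 : Fin n → ℤ) (1 : K) := by
      rw [AddMonoidAlgebra.single_mul_single]; simp
    have h := hp_mul (AddMonoidAlgebra.single u (1 : K)) (AddMonoidAlgebra.single (-u) (1 : K))
    rw [hmul, p0one] at h
    rcases (hp_nonneg (AddMonoidAlgebra.single u (1 : K))).lt_or_eq with h' | h'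
    · exact h'
    · exfalso; rw [← h', zero_mul] at h; exact one_ne_zero h
  have psingle : ∀ (u : Fin n → ℤ) (α : K),
      p (AddMonoidAlgebra.single u α) = abs α * p (AddMonoidAlgebra.single u (1 : K)) := by
    intro u α
    have h : (AddMonoidAlgebra.single (0 : Fin n → ℤ) α) * AddMonoidAlgebra.single u (1 : K)
        = AddMonoidAlgebra.single u α := by
      rw [AddMonoidAlgebra.single_mul_single]; simp
    rw [← h, hp_mul, hp_ext]
  -- the additive map u ↦ log p(χ^u)
  have Fadd : ∀ u v : Fin n → ℤ,
      Real.log (p (AddMonoidAlgebra.single (u + v) (1 : K)))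
        = Real.log (p (AddMonoidAlgebra.single u (1 : K)))
          + Real.log (p (AddMonoidAlgebra.single v (1 : K))) := by
    intro u v
    rw [← Real.log_mul (qpos u).ne' (qpos v).ne', ← hp_mul,
      AddMonoidAlgebra.single_mul_single, one_mul]
  set Fh : (Fin n → ℤ) →+ ℝ :=
    AddMonoidHom.mk' (fun u => Real.log (p (AddMonoidAlgebra.single u (1 : K)))) Fadd with hFh
  have Fsum : ∀ u : Fin n → ℤ,
      Real.log (p (AddMonoidAlgebra.single u (1 : K))) = ∑ j, (u j : ℝ) * (- trop j) := by
    intro u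
    have hu : (∑ j, (u j) • (Pi.single j (1 : ℤ) : Fin n → ℤ)) = u := by
      have h1 : ∀ j, (u j) • (Pi.single j (1 : ℤ) : Fin n → ℤ) = Pi.single j (u j) := by
        intro j; ext k
        by_cases hk : k = j <;> simp [hk, Pi.single_apply]
      simp_rw [h1]
      exact Finset.univ_sum_single u
    calc Real.log (p (AddMonoidAlgebra.single u (1 : K))) = Fh u := rfl
      _ = Fh (∑ j, (u j) • (Pi.single j (1 : ℤ) : Fin n → ℤ)) := by rw [hu]
      _ = ∑ j, (u j : ℝ) * (- trop j) := by
          rw [map_sum]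
          refine Finset.sum_congr rfl fun j _ => ?_
          rw [map_zsmul, zsmul_eq_mul]
          simp [htrop, hFh]
  -- key formula
  have key : ∀ (u : Fin n → ℤ) (α : K), α ≠ 0 →
      - Real.log (p (AddMonoidAlgebra.single u α))
        = - Real.log (abs α) + ∑ j, (u j : ℝ) * trop j := by
    intro u α hα
    have hαne : abs α ≠ 0 := fun hz => hα ((habs_zero α).mp hz)
    rw [psingle, Real.log_mul hαne (qpos u).ne', Fsum]
    rw [neg_add, ← Finset.sum_neg_distrib]
    congr 1
    refine Finset.sum_congr rfl fun j _ => ?_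
    ring
  constructor
  · -- p(f) ≤ 1 for all f ∈ K[M]^Δ  →  trop ∈ Δ
    intro h
    obtain ⟨N, U, c, hc, hΔ⟩ := hΔrat
    rw [hΔ]
    intro i
    by_contra hlt
    push_neg at hlt
    obtain ⟨α, hα0, hαc⟩ := hc i
    set f : AddMonoidAlgebra K (Fin n → ℤ) := AddMonoidAlgebra.single (U i) α with hf
    have hmem : MemPolRing abs Δ f := by
      intro u hu ω hω
      rw [hf, AddMonoidAlgebra.coeff_single] at hu
      have hsupp : u = U i := by
        have := Finsupp.support_single_subset hu
        simpa using this
      subst hsupp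
      have hfu : f.coeff (U i) = α := by rw [hf]; simp
      rw [hfu, hαc]
      rw [hΔ] at hω
      have := hω i
      linarith
    have hle := h f hmem
    have hlog : - Real.log (p f) = (∑ j, (U i j : ℝ) * trop j) + c i := by
      rw [hf, key _ _ hα0, hαc]; ring
    have hppos : 0 < p f := by
      rw [hf, psingle]
      have : 0 < abs α := lt_of_le_of_ne (habs_nonneg α)
        (fun hz => hα0 ((habs_zero α).mp hz.symm))
      exact mul_pos this (qpos _)
    have : Real.log (p f) ≤ 0 := Real.log_nonpos (hp_nonneg f) hle
    linarith
  · -- trop ∈ Δ  →  p(f) ≤ 1 for all f ∈ K[M]^Δ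
    intro htropΔ f hmem
    have hterm : ∀ u ∈ f.coeff.support, p (AddMonoidAlgebra.single u (f.coeff u)) ≤ 1 := by
      intro u hu
      have hfu : f.coeff u ≠ 0 := Finsupp.mem_support_iff.mp hu
      have hpos : 0 < p (AddMonoidAlgebra.single u (f.coeff u)) := by
        rw [psingle]
        have : 0 < abs (f.coeff u) := lt_of_le_of_ne (habs_nonneg _)
          (fun hz => hfu ((habs_zero _).mp hz.symm))
        exact mul_pos this (qpos _)
      have hnn := hmem u hu trop htropΔ
      have hlog : Real.log (p (AddMonoidAlgebra.single u (f.coeff u))) ≤ 0 := by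
        have := key u (f.coeff u) hfu
        linarith
      exact (Real.log_nonpos_iff hpos.le).mp hlog
    have hzero : p 0 = 0 := by
      have : (0 : AddMonoidAlgebra K (Fin n → ℤ))
          = AddMonoidAlgebra.single (0 : Fin n → ℤ) (0 : K) := by simp
      rw [this, hp_ext]
      exact (habs_zero 0).mpr rfl
    have hsum : ∀ s : Finset (Fin n → ℤ), (∀ u ∈ s, p (AddMonoidAlgebra.single u (f.coeff u)) ≤ 1) →
        p (∑ u ∈ s, AddMonoidAlgebra.single u (f.coeff u)) ≤ 1 := by
      intro s
      induction s using Finset.induction_on with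
      | empty => intro _; simp [hzero]
      | insert _ _ hns ih =>
        rename_i a s'
        intro hs
        rw [Finset.sum_insert hns]
        refine le_trans (hp_add _ _) (max_le (hs a (Finset.mem_insert_self a s')) ?_)
        exact ih fun u hu => hs u (Finset.mem_insert_of_mem hu)
    have hrepr : f = ∑ u ∈ f.coeff.support, AddMonoidAlgebra.single u (f.coeff u) := by
      apply AddMonoidAlgebra.coeff_injective
      rw [AddMonoidAlgebra.coeff_sum]
      exact (Finsupp.sum_single _).symm
    rw [hrepr]
    exact hsum _ hterm
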